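/- Let α, β, γ be positive irrational numbers with α + β + γ = 1, max(α,β) < 1/2. Define E_β(m) = B̃_β(m) - B_β(m), where B̃_β = {b(n) - [b(n) ∈ B_α] : n ≥ 1} with b(n) = ⌊n/β⌋. Then E_β(m) = 1 if {(m+1)α} > 1 - α and {(m+1)β} > 1 - β, and E_β(m) = 0 otherwise. -/

import Mathlib

open scoped Classical

def beatty (α : ℝ) : Set ℤ := {m | ∃ n : ℕ, 0 < n ∧ m = ⌊(n : ℝ) / α⌋}

noncomputable def countLe (S : Set ℤ) (m : ℤ) : ℕ :=
  ((Finset.Icc 1 m).filter (fun k => k ∈ S)).card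

noncomputable def btil (α β : ℝ) (n : ℕ) : ℤ :=
  if ⌊(n : ℝ) / β⌋ ∈ beatty α then ⌊(n : ℝ) / β⌋ - 1 else ⌊(n : ℝ) / β⌋

/-- Characterization of membership in a Beatty set via fractional parts. -/
lemma mem_beatty_iff {θ : ℝ} (hθ : Irrational θ) (h0 : 0 < θ) (h1 : θ < 1)
    {k : ℤ} (hk : 0 < k) :
    (k ∈ beatty θ) ↔ 1 - θ < Int.fract ((k : ℝ) * θ) := by
  have hkθ : Irrational ((k : ℝ) * θ) := hθ.intCast_mul (by exact_mod_cast hk.ne')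
  have hkθpos : 0 < (k : ℝ) * θ := by positivity
  have hexp : ((k : ℝ) + 1) * θ = (k : ℝ) * θ + θ := by ring
  constructor
  · rintro ⟨n, hn, hkeq⟩
    have h1n : (k : ℝ) ≤ (n : ℝ) / θ := by
      rw [hkeq]; exact_mod_cast Int.floor_le _
    have h2n : (n : ℝ) / θ < (k : ℝ) + 1 := by
      rw [hkeq]; push_cast; exact Int.lt_floor_add_one _
    have hlow' : (k : ℝ) * θ ≤ n := by rw [← le_div_iff₀ h0]; exact h1n
    have hlow : (k : ℝ) * θ < n := lt_of_le_of_ne hlow' (fun he => hkθ.ne_int n he)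
    have hhigh : (n : ℝ) < ((k : ℝ) + 1) * θ := by rw [← div_lt_iff₀ h0]; exact h2n
    have hfl : ⌊(k : ℝ) * θ⌋ < (n : ℤ) := by
      have h := Int.floor_le ((k : ℝ) * θ)
      exact_mod_cast lt_of_le_of_lt h hlow
    have hge : (⌊(k : ℝ) * θ⌋ : ℝ) + 1 ≤ (n : ℝ) := by exact_mod_cast hfl
    rw [Int.fract]
    linarith [hexp]
  · intro hfr
    have hfl0 : 0 ≤ ⌊(k : ℝ) * θ⌋ := Int.floor_nonneg.mpr hkθpos.le
    set nz : ℤ := ⌊(k : ℝ) * θ⌋ + 1 with hnz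
    have hnzpos : 0 < nz := by omega
    refine ⟨nz.toNat, by omega, ?_⟩
    have hcast : ((nz.toNat : ℕ) : ℝ) = (nz : ℝ) := by
      exact_mod_cast Int.toNat_of_nonneg hnzpos.le
    rw [hcast]
    symm
    rw [Int.floor_eq_iff]
    have hfr' : 1 - θ < (k : ℝ) * θ - ⌊(k : ℝ) * θ⌋ := by
      rw [Int.fract] at hfr; linarith
    constructor
    · rw [le_div_iff₀ h0]
      have : (k : ℝ) * θ < nz := by
        rw [hnz]; push_cast; linarith [Int.lt_floor_add_one ((k : ℝ) * θ)]
      linarith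
    · rw [div_lt_iff₀ h0]
      rw [hnz]; push_cast; linarith [hexp]

/-- A general counting lemma: if the elements of `S ∩ [1,m]` are exactly the
images of `[1,K]` under an injective `f`, then `countLe S m = K`. -/
lemma countLe_eq {S : Set ℤ} {f : ℕ → ℤ} {K : ℕ} {m : ℤ}
    (h1 : ∀ n, 1 ≤ n → n ≤ K → (1 ≤ f n ∧ f n ≤ m) ∧ f n ∈ S)
    (h2 : ∀ x, 1 ≤ x → x ≤ m → x ∈ S → ∃ n, 1 ≤ n ∧ n ≤ K ∧ f n = x)
    (hinj : ∀ n n', f n = f n' → n = n') :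
    countLe S m = K := by
  unfold countLe
  have heq : (Finset.Icc 1 m).filter (fun k => k ∈ S) = (Finset.Icc 1 K).image f := by
    ext x
    simp only [Finset.mem_filter, Finset.mem_image, Finset.mem_Icc]
    constructor
    · rintro ⟨⟨hx1, hx2⟩, hxS⟩
      obtain ⟨n, hn1, hn2, hn3⟩ := h2 x hx1 hx2 hxS
      exact ⟨n, ⟨hn1, hn2⟩, hn3⟩
    · rintro ⟨n, ⟨hn1, hn2⟩, rfl⟩
      exact ⟨(h1 n hn1 hn2).1, (h1 n hn1 hn2).2⟩
  rw [heq, Finset.card_image_of_injective _ (fun a b h => hinj a b h), Nat.card_Icc]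
  omega

theorem Ebeta_formula (α β γ : ℝ)
    (hirra : Irrational α) (hirrb : Irrational β) (hirrc : Irrational γ)
    (ha : 0 < α) (hb : 0 < β) (hc : 0 < γ) (hsum : α + β + γ = 1)
    (hmax : max α β < 1 / 2)
    (m : ℕ) (hm : 0 < m) :
    (countLe {x : ℤ | ∃ n : ℕ, 0 < n ∧ x = btil α β n} (m : ℤ) : ℤ) -
        countLe (beatty β) (m : ℤ) =
      if 1 - α < Int.fract (((m : ℝ) + 1) * α) ∧ 1 - β < Int.fract (((m : ℝ) + 1) * β)
      then 1 else 0 := by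
  have hah : α < 1/2 := lt_of_le_of_lt (le_max_left α β) hmax
  have hbh : β < 1/2 := lt_of_le_of_lt (le_max_right α β) hmax
  set f : ℕ → ℤ := fun n => ⌊(n : ℝ) / β⌋ with hf
  -- basic facts about f
  have hstep : ∀ n n' : ℕ, n < n' → f n + 2 ≤ f n' := by
    intro n n' h
    have hn' : (n : ℝ) + 1 ≤ (n' : ℝ) := by exact_mod_cast h
    have hfl : (f n : ℝ) ≤ (n : ℝ) / β := Int.floor_le _
    have hfl2 : (f n : ℝ) * β ≤ n := by rw [← le_div_iff₀ hb]; exact hfl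
    have h2 : (f n : ℝ) + 2 ≤ (n' : ℝ) / β := by
      rw [le_div_iff₀ hb]
      nlinarith
    exact Int.le_floor.mpr (by push_cast; exact h2)
  have hmono : ∀ n n' : ℕ, n < n' → f n < f n' := fun n n' h => by
    have := hstep n n' h; omega
  have hfinj : ∀ n n' : ℕ, f n = f n' → n = n' := by
    intro n n' h
    rcases lt_trichotomy n n' with h' | h' | h'
    · exact absurd h (hmono n n' h').ne
    · exact h'
    · exact absurd h.symm (hmono n' n h').ne
  have hf2 : ∀ n : ℕ, 1 ≤ n → 2 ≤ f n := by
    intro n hn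
    apply Int.le_floor.mpr
    push_cast
    rw [le_div_iff₀ hb]
    have : (1 : ℝ) ≤ n := by exact_mod_cast hn
    nlinarith
  -- bounds relating btil and f
  have hbd : ∀ n : ℕ, f n - 1 ≤ btil α β n ∧ btil α β n ≤ f n := by
    intro n
    have h : f n = ⌊(n : ℝ) / β⌋ := rfl
    unfold btil
    rw [← h]
    split <;> omega
  have hbtilmono : ∀ a b : ℕ, a < b → btil α β a < btil α β b := by
    intro a b hab
    obtain ⟨h1, h2⟩ := hbd a
    obtain ⟨h3, h4⟩ := hbd b
    have := hstep a b hab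
    omega
  have hbtilinj : ∀ n n' : ℕ, btil α β n = btil α β n' → n = n' := by
    intro n n' h
    rcases lt_trichotomy n n' with h' | h' | h'
    · exact absurd h (hbtilmono n n' h').ne
    · exact h'
    · exact absurd h.symm (hbtilmono n' n h').ne
  -- the key threshold
  have hmb_irr : Irrational (((m : ℝ) + 1) * β) := by
    have he : (((m : ℝ) + 1)) = ((m + 1 : ℕ) : ℝ) := by push_cast; ring
    rw [he]
    exact hirrb.natCast_mul (by omega)
  have hmbpos : 0 < ((m : ℝ) + 1) * β := by positivity
  have hKz0 : 0 ≤ ⌊((m : ℝ) + 1) * β⌋ := Int.floor_nonneg.mpr hmbpos.le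
  obtain ⟨K, hKcast⟩ : ∃ K : ℕ, (K : ℤ) = ⌊((m : ℝ) + 1) * β⌋ :=
    ⟨_, Int.toNat_of_nonneg hKz0⟩
  have hKr : (K : ℝ) = (⌊((m : ℝ) + 1) * β⌋ : ℝ) := by exact_mod_cast hKcast
  -- f n ≤ m ↔ n ≤ K
  have hiff : ∀ n : ℕ, (f n ≤ (m : ℤ) ↔ n ≤ K) := by
    intro n
    constructor
    · intro h
      have h0 : f n < (m : ℤ) + 1 := by omega
      have h1 : (n : ℝ) / β < ((m : ℤ) : ℝ) + 1 := by
        have := Int.floor_lt.mp (show ⌊(n : ℝ) / β⌋ < (m : ℤ) + 1 from h0)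
        push_cast at this ⊢
        linarith
      have h2 : (n : ℝ) < ((m : ℝ) + 1) * β := by
        rw [div_lt_iff₀ hb] at h1; push_cast at h1; linarith
      have h3 : (n : ℤ) ≤ ⌊((m : ℝ) + 1) * β⌋ := Int.le_floor.mpr h2.le
      omega
    · intro h
      have h3 : (n : ℤ) ≤ ⌊((m : ℝ) + 1) * β⌋ := by omega
      have h4 : (n : ℝ) ≤ ((m : ℝ) + 1) * β :=
        le_trans (by exact_mod_cast h3) (Int.floor_le _)
      have h5 : (n : ℝ) < ((m : ℝ) + 1) * β :=
        lt_of_le_of_ne h4 (fun he => hmb_irr.ne_int n he.symm)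
      have h6 : (n : ℝ) / β < (m : ℝ) + 1 := by rw [div_lt_iff₀ hb]; exact h5
      have h7 : f n < (m : ℤ) + 1 := Int.floor_lt.mpr (by push_cast; linarith)
      omega
  -- membership conditions
  have hcond_a : ((m : ℤ) + 1) ∈ beatty α ↔ 1 - α < Int.fract (((m : ℝ) + 1) * α) := by
    have h := mem_beatty_iff hirra ha (by linarith) (k := (m : ℤ) + 1) (by omega)
    have he : (((m : ℤ) + 1 : ℤ) : ℝ) = (m : ℝ) + 1 := by push_cast; ring
    rw [he] at h
    exact h
  have hcond_b : ((m : ℤ) + 1) ∈ beatty β ↔ 1 - β < Int.fract (((m : ℝ) + 1) * β) := by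
    have h := mem_beatty_iff hirrb hb (by linarith) (k := (m : ℤ) + 1) (by omega)
    have he : (((m : ℤ) + 1 : ℤ) : ℝ) = (m : ℝ) + 1 := by push_cast; ring
    rw [he] at h
    exact h
  -- if m+1 ∈ beatty β then f (K+1) = m+1
  have hfK1 : ((m : ℤ) + 1) ∈ beatty β → f (K + 1) = (m : ℤ) + 1 := by
    rintro ⟨n₀, hn₀, hn₀eq⟩
    have hfn₀ : f n₀ = (m : ℤ) + 1 := hn₀eq.symm
    have hgt : K < n₀ := by
      by_contra h
      have := (hiff n₀).mpr (by omega)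
      omega
    have he : (⌊(n₀ : ℝ) / β⌋ : ℝ) = (m : ℝ) + 1 := by
      rw [← hn₀eq]; push_cast; ring
    have h2 : (n₀ : ℝ) / β < (m : ℝ) + 2 := by
      have := Int.lt_floor_add_one ((n₀ : ℝ) / β)
      linarith
    have h3 : (n₀ : ℝ) < ((m : ℝ) + 2) * β := by
      rw [← div_lt_iff₀ hb]; exact h2
    have h4 : ((m : ℝ) + 1) * β < (K : ℝ) + 1 := by
      have := Int.lt_floor_add_one (((m : ℝ) + 1) * β)
      rw [hKr]; linarith
    have h5 : (n₀ : ℝ) < (K : ℝ) + 2 := by nlinarith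
    have h6 : (n₀ : ℤ) < (K : ℤ) + 2 := by exact_mod_cast h5
    have h7 : n₀ = K + 1 := by omega
    rw [← h7]; exact hfn₀
  by_cases hcond : ((m : ℤ) + 1) ∈ beatty α ∧ ((m : ℤ) + 1) ∈ beatty β
  · rw [if_pos (⟨hcond_a.mp hcond.1, hcond_b.mp hcond.2⟩)]
    have hcount1 : countLe (beatty β) (m : ℤ) = K := by
      apply countLe_eq (f := f)
      · intro n hn1 hn2
        exact ⟨⟨by have := hf2 n hn1; omega, (hiff n).mpr hn2⟩, ⟨n, hn1, rfl⟩⟩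
      · rintro x hx1 hx2 ⟨n, hn, rfl⟩
        exact ⟨n, hn, (hiff n).mp hx2, rfl⟩
      · exact hfinj
    have hcount2 : countLe {x : ℤ | ∃ n : ℕ, 0 < n ∧ x = btil α β n} (m : ℤ) = K + 1 := by
      apply countLe_eq (f := btil α β)
      · intro n hn1 hn2
        obtain ⟨hl, hr⟩ := hbd n
        refine ⟨⟨by have := hf2 n hn1; omega, ?_⟩, ⟨n, hn1, rfl⟩⟩
        rcases Nat.lt_or_ge n (K + 1) with h | h
        · have : f n ≤ (m : ℤ) := (hiff n).mpr (by omega)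
          omega
        · have hn' : n = K + 1 := by omega
          have hfn : f n = (m : ℤ) + 1 := by rw [hn']; exact hfK1 hcond.2
          have heq : f n = ⌊(n : ℝ) / β⌋ := rfl
          unfold btil
          rw [← heq, hfn, if_pos hcond.1]
          omega
      · rintro x hx1 hx2 ⟨n, hn, rfl⟩
        obtain ⟨hl, hr⟩ := hbd n
        refine ⟨n, hn, ?_, rfl⟩
        rcases le_or_gt (f n) (m : ℤ) with h | h
        · have := (hiff n).mp h; omega
        · have hfn : f n = (m : ℤ) + 1 := by omega
          have hK1 := hfK1 hcond.2
          have : n = K + 1 := hfinj n (K+1) (by omega)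
          omega
      · exact hbtilinj
    rw [hcount1, hcount2]
    push_cast
    ring
  · rw [if_neg (by
      intro hcontra
      exact hcond ⟨hcond_a.mpr hcontra.1, hcond_b.mpr hcontra.2⟩)]
    have hcount1 : countLe (beatty β) (m : ℤ) = K := by
      apply countLe_eq (f := f)
      · intro n hn1 hn2
        exact ⟨⟨by have := hf2 n hn1; omega, (hiff n).mpr hn2⟩, ⟨n, hn1, rfl⟩⟩
      · rintro x hx1 hx2 ⟨n, hn, rfl⟩
        exact ⟨n, hn, (hiff n).mp hx2, rfl⟩
      · exact hfinj
    have hcount2 : countLe {x : ℤ | ∃ n : ℕ, 0 < n ∧ x = btil α β n} (m : ℤ) = K := by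
      apply countLe_eq (f := btil α β)
      · intro n hn1 hn2
        obtain ⟨hl, hr⟩ := hbd n
        have : f n ≤ (m : ℤ) := (hiff n).mpr hn2
        exact ⟨⟨by have := hf2 n hn1; omega, by omega⟩, ⟨n, hn1, rfl⟩⟩
      · rintro x hx1 hx2 ⟨n, hn, rfl⟩
        obtain ⟨hl, hr⟩ := hbd n
        refine ⟨n, hn, ?_, rfl⟩
        rcases le_or_gt (f n) (m : ℤ) with h | h
        · exact (hiff n).mp h
        · exfalso
          have hfn : f n = (m : ℤ) + 1 := by omega
          have hbtil : btil α β n = (m : ℤ) := by omega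
          have hmem : f n ∈ beatty α := by
            by_contra hmem
            have heq : f n = ⌊(n : ℝ) / β⌋ := rfl
            have : btil α β n = f n := by
              unfold btil; rw [← heq, if_neg hmem]
            omega
          exact hcond ⟨by rw [← hfn]; exact hmem, ⟨n, hn, hfn.symm⟩⟩
      · exact hbtilinj
    rw [hcount1, hcount2]
    ring
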